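/- Let m ∈ ℝ and s > 0, and let φ denote the density of N(m, s²). Then the pushforward of N(m, s²) under the map y ↦ sinh²(y) is concentrated on [0,∞) and is absolutely continuous with respect to Lebesgue measure, with density y ↦ (1/(2√(y(1+y))))·(φ(arcsinh(√y)) + φ(−arcsinh(√y))) for y > 0. -/

import Mathlib

open MeasureTheory ProbabilityTheory

/-- Density of a Gaussian `N(m, s²)` evaluated at `u`. -/
noncomputable def gaussDensity (m s u : ℝ) : ℝ :=
  (1 / Real.sqrt (2 * Real.pi * s ^ 2)) * Real.exp (-(u - m) ^ 2 / (2 * s ^ 2))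

open Real Set in
private lemma lintegral_image_1d {s : Set ℝ} {f f' : ℝ → ℝ} (hs : MeasurableSet s)
    (hf' : ∀ x ∈ s, HasDerivWithinAt f (f' x) s x) (hf : Set.InjOn f s) (g : ℝ → ENNReal) :
    ∫⁻ x in f '' s, g x = ∫⁻ x in s, ENNReal.ofReal |f' x| * g (f x) := by
  simpa only [ContinuousLinearMap.det_toSpanSingleton] using
    MeasureTheory.lintegral_image_eq_lintegral_abs_det_fderiv_mul volume hs
      (fun x hx => (hf' x hx).hasFDerivWithinAt) hf g

open Real Set in
private lemma hasDerivAt_arsinh_sqrt {x : ℝ} (hx : 0 < x) :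
    HasDerivAt (fun x => arsinh (√x)) (1 / (2 * √(x * (1 + x)))) x := by
  have h1 : HasDerivAt (√·) (1 / (2 * √x)) x := Real.hasDerivAt_sqrt hx.ne'
  have h2 : HasDerivAt arsinh (√(1 + (√x) ^ 2))⁻¹ (√x) := Real.hasDerivAt_arsinh _
  have := h2.comp x h1
  refine this.congr_deriv ?_
  rw [Real.sq_sqrt hx.le, Real.sqrt_mul hx.le]
  have hx' : (0:ℝ) < √x := Real.sqrt_pos.mpr hx
  have h1x : (0:ℝ) < √(1 + x) := Real.sqrt_pos.mpr (by linarith)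
  field_simp

/-- The pushforward of `N(m, s²)` under `y ↦ sinh²(y)` is concentrated on `[0,∞)` and is
absolutely continuous with respect to Lebesgue measure, with density
`y ↦ (1/(2√(y(1+y)))) (φ(arcsinh √y) + φ(−arcsinh √y))` for `y > 0`, where `φ` is the
`N(m,s²)` density. -/
theorem gaussian_sinh_sq_pushforward_density (m s : ℝ) (hs : 0 < s) :
    Measure.map (fun y : ℝ => Real.sinh y ^ 2) (gaussianReal m ((s ^ 2).toNNReal))
      = volume.withDensity
          (Set.indicator (Set.Ioi (0 : ℝ)) fun y =>
            ENNReal.ofReal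
              ((1 / (2 * Real.sqrt (y * (1 + y))))
                * (gaussDensity m s (Real.arsinh (Real.sqrt y))
                    + gaussDensity m s (-Real.arsinh (Real.sqrt y))))) := by
  classical
  set v : NNReal := (s ^ 2).toNNReal with hv_def
  have hv : v ≠ 0 := by
    simp [hv_def, Real.toNNReal_eq_zero, not_le, pow_pos hs, hs.ne']
  have hvv : (v : ℝ) = s ^ 2 := Real.coe_toNNReal _ (sq_nonneg s)
  set f : ℝ → ℝ := fun y => Real.sinh y ^ 2 with hf_def
  have hf_meas : Measurable f := (Real.continuous_sinh.pow 2).measurable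
  set φ : ℝ → ENNReal := gaussianPDF m v with hφ_def
  have hφ_meas : Measurable φ := measurable_gaussianPDF m v
  set g : ℝ → ℝ := fun x => Real.arsinh (Real.sqrt x) with hg_def
  set g' : ℝ → ℝ := fun x => 1 / (2 * Real.sqrt (x * (1 + x))) with hg'_def
  have hg'_nonneg : ∀ x, 0 ≤ g' x := fun x => by
    apply div_nonneg zero_le_one
    positivity
  have hg_meas : Measurable g :=
    Real.continuous_arsinh.measurable.comp Real.continuous_sqrt.measurable
  have hg'_meas : Measurable g' := by
    apply Measurable.div measurable_const
    exact (measurable_const.mul ((measurable_id.mul (measurable_const.add measurable_id)).sqrt))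
  ext A hA
  rw [gaussianReal_of_var_ne_zero m hv, Measure.map_apply hf_meas hA,
    withDensity_apply _ (hf_meas hA), withDensity_apply _ hA]
  -- RHS simplification
  have hRHS : ∫⁻ x in A, (Set.Ioi (0:ℝ)).indicator
      (fun y => ENNReal.ofReal ((1 / (2 * Real.sqrt (y * (1 + y))))
        * (gaussDensity m s (Real.arsinh (Real.sqrt y))
            + gaussDensity m s (-Real.arsinh (Real.sqrt y))))) x
      = ∫⁻ x in A ∩ Set.Ioi 0, ENNReal.ofReal (g' x
          * (gaussDensity m s (g x) + gaussDensity m s (-g x))) := by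
    rw [← lintegral_indicator hA, ← lintegral_indicator (hA.inter measurableSet_Ioi)]
    congr 1
    ext x
    rw [Set.indicator_indicator]
  rw [hRHS]
  -- split LHS integral into negative and positive halves
  have hsplit : ∫⁻ y in f ⁻¹' A, φ y
      = (∫⁻ y in f ⁻¹' A ∩ Set.Iio 0, φ y) + ∫⁻ y in f ⁻¹' A ∩ Set.Ioi 0, φ y := by
    have h0 : (volume : Measure ℝ) ({0} : Set ℝ) = 0 := measure_singleton 0
    have hae : (f ⁻¹' A : Set ℝ) =ᵐ[volume]
        ((f ⁻¹' A ∩ Set.Iio 0) ∪ (f ⁻¹' A ∩ Set.Ioi 0) : Set ℝ) := by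
      rw [← Set.inter_union_distrib_left, Set.Iio_union_Ioi]
      have : (f ⁻¹' A : Set ℝ) \ (f ⁻¹' A ∩ {(0:ℝ)}ᶜ) ⊆ {0} := by
        intro x hx
        simp only [Set.mem_diff, Set.mem_inter_iff, Set.mem_compl_iff, not_and, not_not] at hx
        exact hx.2 hx.1
      refine (MeasureTheory.ae_eq_set.2 ⟨measure_mono_null this h0, measure_mono_null ?_ h0⟩)
      intro x hx
      exact ((hx.2 hx.1.1) : False).elim
    rw [setLIntegral_congr hae,
      lintegral_union ((hf_meas hA).inter measurableSet_Ioi)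
        (Set.disjoint_of_subset Set.inter_subset_right Set.inter_subset_right
          ((Set.Iio_disjoint_Ici le_rfl).mono_right Set.Ioi_subset_Ici_self))]
  rw [hsplit]
  have hs_meas : MeasurableSet (A ∩ Set.Ioi 0) := hA.inter measurableSet_Ioi
  -- positive part
  have himg_pos : g '' (A ∩ Set.Ioi 0) = f ⁻¹' A ∩ Set.Ioi 0 := by
    ext y
    constructor
    · rintro ⟨a, ⟨haA, ha0⟩, rfl⟩
      have ha0' : (0:ℝ) < a := ha0
      constructor
      · show f (g a) ∈ A
        have : f (g a) = a := by
          simp only [hf_def, hg_def, Real.sinh_arsinh]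
          exact Real.sq_sqrt ha0'.le
        rwa [this]
      · show (0:ℝ) < Real.arsinh (Real.sqrt a)
        exact Real.arsinh_pos_iff.2 (Real.sqrt_pos.2 ha0')
    · rintro ⟨hyA, hy0⟩
      have hy0' : (0:ℝ) < y := hy0
      have hsinh : 0 < Real.sinh y := Real.sinh_pos_iff.2 hy0'
      refine ⟨f y, ⟨hyA, ?_⟩, ?_⟩
      · exact pow_pos hsinh 2
      · show Real.arsinh (Real.sqrt (Real.sinh y ^ 2)) = y
        rw [Real.sqrt_sq hsinh.le, Real.arsinh_sinh]
  have hderiv_pos : ∀ x ∈ A ∩ Set.Ioi 0,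
      HasDerivWithinAt g (g' x) (A ∩ Set.Ioi 0) x := fun x hx =>
    (hasDerivAt_arsinh_sqrt hx.2).hasDerivWithinAt
  have hinj : Set.InjOn g (A ∩ Set.Ioi 0) := by
    intro a ha b hb hab
    have := Real.arsinh_injective hab
    have ha' : (0:ℝ) ≤ a := le_of_lt ha.2
    have hb' : (0:ℝ) ≤ b := le_of_lt hb.2
    calc a = Real.sqrt a ^ 2 := (Real.sq_sqrt ha').symm
    _ = Real.sqrt b ^ 2 := by rw [this]
    _ = b := Real.sq_sqrt hb'
  have hpos : ∫⁻ y in f ⁻¹' A ∩ Set.Ioi 0, φ y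
      = ∫⁻ x in A ∩ Set.Ioi 0, ENNReal.ofReal |g' x| * φ (g x) := by
    rw [← himg_pos]
    exact lintegral_image_1d hs_meas hderiv_pos hinj φ
  -- negative part
  have himg_neg : (fun x => -g x) '' (A ∩ Set.Ioi 0) = f ⁻¹' A ∩ Set.Iio 0 := by
    ext y
    constructor
    · rintro ⟨a, ⟨haA, ha0⟩, rfl⟩
      have ha0' : (0:ℝ) < a := ha0
      constructor
      · show f (-g a) ∈ A
        have : f (-g a) = a := by
          show Real.sinh (-(Real.arsinh (Real.sqrt a))) ^ 2 = a
          rw [Real.sinh_neg, neg_sq, Real.sinh_arsinh, Real.sq_sqrt ha0'.le]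
        rwa [this]
      · show -Real.arsinh (Real.sqrt a) < 0
        exact neg_lt_zero.2 (Real.arsinh_pos_iff.2 (Real.sqrt_pos.2 ha0'))
    · rintro ⟨hyA, hy0⟩
      have hy0' : y < 0 := hy0
      have hsinh : Real.sinh y < 0 := by
        rwa [← Real.sinh_zero, Real.sinh_lt_sinh]
      refine ⟨f y, ⟨hyA, ?_⟩, ?_⟩
      · exact sq_pos_of_neg hsinh
      · show -Real.arsinh (Real.sqrt (Real.sinh y ^ 2)) = y
        have : Real.sqrt (Real.sinh y ^ 2) = -Real.sinh y := by
          rw [← neg_sq, Real.sqrt_sq (neg_nonneg.2 hsinh.le)]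
        rw [this, ← Real.sinh_neg, Real.arsinh_sinh, neg_neg]
  have hderiv_neg : ∀ x ∈ A ∩ Set.Ioi 0,
      HasDerivWithinAt (fun x => -g x) (-g' x) (A ∩ Set.Ioi 0) x := fun x hx =>
    ((hasDerivAt_arsinh_sqrt hx.2).hasDerivWithinAt).neg
  have hinj_neg : Set.InjOn (fun x => -g x) (A ∩ Set.Ioi 0) := fun a ha b hb hab =>
    hinj ha hb (neg_injective hab)
  have hneg : ∫⁻ y in f ⁻¹' A ∩ Set.Iio 0, φ y
      = ∫⁻ x in A ∩ Set.Ioi 0, ENNReal.ofReal |(-g' x)| * φ (-g x) := by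
    rw [← himg_neg]
    exact lintegral_image_1d hs_meas hderiv_neg hinj_neg φ
  have hm : Measurable fun x : ℝ => ENNReal.ofReal |(-g' x)| * φ (-g x) :=
    (hg'_meas.neg.abs.ennreal_ofReal).mul (hφ_meas.comp hg_meas.neg)
  rw [hpos, hneg, ← lintegral_add_left hm]
  refine setLIntegral_congr_fun hs_meas (fun x hx => ?_)
  have hx0 : (0:ℝ) < x := hx.2
  have habs : |(-g' x)| = g' x := by rw [abs_neg, abs_of_nonneg (hg'_nonneg x)]
  have habs' : |g' x| = g' x := abs_of_nonneg (hg'_nonneg x)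
  have hgd : ∀ u : ℝ, φ u = ENNReal.ofReal (gaussDensity m s u) := by
    intro u
    rw [hφ_def, gaussianPDF_def]
    simp only [gaussianPDFReal, gaussDensity, hvv, one_div]
  have hgd_nonneg : ∀ u : ℝ, 0 ≤ gaussDensity m s u := by
    intro u
    apply mul_nonneg
    · positivity
    · exact (Real.exp_pos _).le
  rw [habs, habs', hgd, hgd]
  rw [ENNReal.ofReal_mul (hg'_nonneg x), ENNReal.ofReal_add (hgd_nonneg _) (hgd_nonneg _)]
  ring
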